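/- Let 𝔥 be a fat indecomposable (−3)-saturated Hoffman graph with a reduced representation ψ : V_s(𝔥) → ℤⁿ of norm 3. If i ∈ {1, …, n} and ψ(s)_i ≠ 0 for some slim vertex s, then there exist slim vertices s₁, s₂ of 𝔥 such that ψ(s₁)_i = 1 and ψ(s₂)_i = −1. -/

import Mathlib

attribute [local instance] Classical.propDecidable

open scoped RealInnerProductSpace

/-- A Hoffman graph: a graph together with a labeling of its vertices as fat or slim,
such that every fat vertex has a slim neighbor and fat vertices are pairwise nonadjacent. -/
structure HoffmanGraph (V : Type*) where
  graph : SimpleGraph V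
  IsFat : V → Prop
  fat_not_adj : ∀ {x y : V}, IsFat x → IsFat y → ¬ graph.Adj x y
  fat_slim_nbr : ∀ {x : V}, IsFat x → ∃ y : V, ¬ IsFat y ∧ graph.Adj x y

namespace HoffmanGraph

variable {V : Type*}

/-- A vertex is slim if it is not fat. -/
def IsSlim (H : HoffmanGraph V) (x : V) : Prop := ¬ H.IsFat x

/-- The type of slim vertices. -/
abbrev Slim (H : HoffmanGraph V) := {v : V // H.IsSlim v}

/-- The number of fat neighbors of a vertex. -/
noncomputable def fatDeg (H : HoffmanGraph V) (x : V) : ℕ :=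
  {f : V | H.IsFat f ∧ H.graph.Adj x f}.ncard

/-- The number of common fat neighbors of two vertices. -/
noncomputable def commonFat (H : HoffmanGraph V) (x y : V) : ℕ :=
  {f : V | H.IsFat f ∧ H.graph.Adj x f ∧ H.graph.Adj y f}.ncard

lemma commonFat_comm (H : HoffmanGraph V) (x y : V) :
    H.commonFat x y = H.commonFat y x := by
  unfold commonFat
  congr 1
  ext f
  simp only [Set.mem_setOf_eq]
  tauto

/-- A Hoffman graph is fat if every slim vertex has a fat neighbor. -/
def IsFatGraph (H : HoffmanGraph V) : Prop :=
  ∀ x, H.IsSlim x → ∃ f, H.IsFat f ∧ H.graph.Adj x f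

/-- A representation of norm `m`. -/
def IsRep (H : HoffmanGraph V) (m : ℝ) {E : Type*} [NormedAddCommGroup E]
    [InnerProductSpace ℝ E] (φ : V → E) : Prop :=
  (∀ x, H.IsSlim x → ⟪φ x, φ x⟫ = m) ∧
  (∀ x, H.IsFat x → ⟪φ x, φ x⟫ = 1) ∧
  (∀ x y, H.graph.Adj x y → ⟪φ x, φ y⟫ = 1) ∧
  (∀ x y, x ≠ y → ¬ H.graph.Adj x y → ⟪φ x, φ y⟫ = 0)

/-- A reduced representation of norm `m` (only the values on slim vertices matter). -/
def IsReducedRep (H : HoffmanGraph V) (m : ℝ) {E : Type*} [NormedAddCommGroup E]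
    [InnerProductSpace ℝ E] (ψ : V → E) : Prop :=
  (∀ x, H.IsSlim x → ⟪ψ x, ψ x⟫ = m - H.fatDeg x) ∧
  (∀ x y, H.IsSlim x → H.IsSlim y → H.graph.Adj x y → ⟪ψ x, ψ y⟫ = 1 - H.commonFat x y) ∧
  (∀ x y, H.IsSlim x → H.IsSlim y → x ≠ y → ¬ H.graph.Adj x y →
    ⟪ψ x, ψ y⟫ = - (H.commonFat x y : ℝ))

/-- The matrix B(𝔥) = A_s − C Cᵀ, indexed by the slim vertices. -/
noncomputable def matrixB (H : HoffmanGraph V) : Matrix H.Slim H.Slim ℝ :=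
  fun x y => (if H.graph.Adj x.1 y.1 then (1 : ℝ) else 0) - (H.commonFat x.1 y.1 : ℝ)

/-- The smallest eigenvalue of a Hoffman graph. -/
noncomputable def lambdaMin (H : HoffmanGraph V) [Fintype V] : ℝ :=
  sInf (spectrum ℝ H.matrixB)

/-- A subset of the vertices induces a Hoffman graph iff every fat vertex of it retains
a slim neighbor inside it. -/
def IsGoodSubset (H : HoffmanGraph V) (S : Set V) : Prop :=
  ∀ x ∈ S, H.IsFat x → ∃ y ∈ S, ¬ H.IsFat y ∧ H.graph.Adj x y

/-- The induced Hoffman subgraph on a good subset. -/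
def induce (H : HoffmanGraph V) (S : Set V) (hS : H.IsGoodSubset S) : HoffmanGraph S where
  graph := H.graph.induce S
  IsFat := fun x => H.IsFat x.1
  fat_not_adj := by
    intro x y hx hy hadj
    exact H.fat_not_adj hx hy hadj
  fat_slim_nbr := by
    rintro ⟨x, hxS⟩ hx
    obtain ⟨y, hyS, hy, hadj⟩ := hS x hxS hx
    exact ⟨⟨y, hyS⟩, hy, hadj⟩

/-- An (abstract) induced Hoffman subgraph relation between Hoffman graphs. -/
def IsInducedSubgraphOf {V₁ V₂ : Type*} (H₁ : HoffmanGraph V₁) (H₂ : HoffmanGraph V₂) : Prop :=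
  ∃ e : V₁ ↪ V₂, (∀ x y, H₂.graph.Adj (e x) (e y) ↔ H₁.graph.Adj x y) ∧
    (∀ x, H₂.IsFat (e x) ↔ H₁.IsFat x)

/-- Isomorphism of Hoffman graphs. -/
def IsIsoTo {V₁ V₂ : Type*} (H₁ : HoffmanGraph V₁) (H₂ : HoffmanGraph V₂) : Prop :=
  ∃ e : V₁ ≃ V₂, (∀ x y, H₂.graph.Adj (e x) (e y) ↔ H₁.graph.Adj x y) ∧
    (∀ x, H₂.IsFat (e x) ↔ H₁.IsFat x)

/-- `H` is the sum of its induced subgraphs on `W₁` and `W₂`. -/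
structure IsSum (H : HoffmanGraph V) (W₁ W₂ : Set V) : Prop where
  nonempty₁ : W₁.Nonempty
  nonempty₂ : W₂.Nonempty
  good₁ : H.IsGoodSubset W₁
  good₂ : H.IsGoodSubset W₂
  union_eq : W₁ ∪ W₂ = Set.univ
  slim_partition : ∀ v, H.IsSlim v → (v ∈ W₁ ↔ v ∉ W₂)
  fat_closed₁ : ∀ x ∈ W₁, H.IsSlim x → ∀ f, H.IsFat f → H.graph.Adj x f → f ∈ W₁
  fat_closed₂ : ∀ x ∈ W₂, H.IsSlim x → ∀ f, H.IsFat f → H.graph.Adj x f → f ∈ W₂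
  common_le : ∀ x ∈ W₁, ∀ y ∈ W₂, H.IsSlim x → H.IsSlim y → H.commonFat x y ≤ 1
  common_iff : ∀ x ∈ W₁, ∀ y ∈ W₂, H.IsSlim x → H.IsSlim y →
    (H.commonFat x y = 1 ↔ H.graph.Adj x y)

/-- `H` is decomposable if it is the sum of two nonempty induced Hoffman subgraphs. -/
def Decomposable (H : HoffmanGraph V) : Prop := ∃ W₁ W₂ : Set V, H.IsSum W₁ W₂

def Indecomposable (H : HoffmanGraph V) : Prop := ¬ H.Decomposable

/-- `H` is the sum of the family of its induced subgraphs on `W i`. -/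
structure IsSumFamily (H : HoffmanGraph V) {n : ℕ} (W : Fin n → Set V) : Prop where
  nonempty : ∀ i, (W i).Nonempty
  good : ∀ i, H.IsGoodSubset (W i)
  union_eq : ⋃ i, W i = Set.univ
  slim_mem_unique : ∀ v, H.IsSlim v → ∃! i, v ∈ W i
  fat_closed : ∀ i, ∀ x ∈ W i, H.IsSlim x → ∀ f, H.IsFat f → H.graph.Adj x f → f ∈ W i
  common_le : ∀ i j, i ≠ j → ∀ x ∈ W i, ∀ y ∈ W j, H.IsSlim x → H.IsSlim y →
    H.commonFat x y ≤ 1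
  common_iff : ∀ i j, i ≠ j → ∀ x ∈ W i, ∀ y ∈ W j, H.IsSlim x → H.IsSlim y →
    (H.commonFat x y = 1 ↔ H.graph.Adj x y)

/-- Attach a new fat vertex (the `none` vertex) adjacent exactly to the slim vertices in `S`. -/
def attachFat (H : HoffmanGraph V) (S : Set V) (hne : S.Nonempty)
    (hslim : ∀ v ∈ S, H.IsSlim v) : HoffmanGraph (Option V) where
  graph := {
    Adj := fun a b =>
      match a, b with
      | none, none => False
      | none, some v => v ∈ S
      | some v, none => v ∈ S
      | some u, some v => H.graph.Adj u v
    symm := by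
      constructor
      rintro (_|u) (_|v) h
      · exact h.elim
      · exact h
      · exact h
      · exact h.symm
    loopless := by
      constructor
      rintro (_|u) h
      · exact h.elim
      · exact H.graph.loopless.irrefl u h }
  IsFat := fun a => match a with | none => True | some v => H.IsFat v
  fat_not_adj := by
    rintro (_|u) (_|v) hu hv h
    · exact h.elim
    · exact (hslim v h) hv
    · exact (hslim u h) hu
    · exact H.fat_not_adj hu hv h
  fat_slim_nbr := by
    rintro (_|u) hu
    · obtain ⟨s, hs⟩ := hne
      exact ⟨some s, hslim s hs, hs⟩
    · obtain ⟨y, hy, hadj⟩ := H.fat_slim_nbr hu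
      exact ⟨some y, hy, hadj⟩

/-- `H` is `μ`-saturated: it has smallest eigenvalue at least `μ` and no fat vertex can be
attached while keeping the smallest eigenvalue at least `μ`. -/
def IsSaturated (H : HoffmanGraph V) [Fintype V] (μ : ℝ) : Prop :=
  μ ≤ H.lambdaMin ∧
  ∀ (S : Set V) (hne : S.Nonempty) (hslim : ∀ v ∈ S, H.IsSlim v),
    ¬ (μ ≤ (H.attachFat S hne hslim).lambdaMin)

/-- The special graph `S⁻(𝔥)`: slim vertices, adjacent when the inner product of their
reduced representations is negative. -/
noncomputable def specialMinus (H : HoffmanGraph V) : SimpleGraph H.Slim where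
  Adj x y := x ≠ y ∧
    ((H.graph.Adj x.1 y.1 ∧ (1 : ℝ) - (H.commonFat x.1 y.1 : ℝ) < 0) ∨
     (¬ H.graph.Adj x.1 y.1 ∧ -(H.commonFat x.1 y.1 : ℝ) < 0))
  symm := by
    constructor
    rintro x y ⟨hne, h⟩
    refine ⟨hne.symm, ?_⟩
    rw [H.commonFat_comm y.1 x.1]
    rcases h with ⟨ha, hl⟩ | ⟨ha, hl⟩
    · exact Or.inl ⟨ha.symm, hl⟩
    · exact Or.inr ⟨fun hadj => ha hadj.symm, hl⟩
  loopless := ⟨fun x h => h.1 rfl⟩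

/-- The special graph `S⁺(𝔥)`: slim vertices, adjacent when the inner product of their
reduced representations is positive. -/
noncomputable def specialPlus (H : HoffmanGraph V) : SimpleGraph H.Slim where
  Adj x y := x ≠ y ∧
    ((H.graph.Adj x.1 y.1 ∧ 0 < (1 : ℝ) - (H.commonFat x.1 y.1 : ℝ)) ∨
     (¬ H.graph.Adj x.1 y.1 ∧ 0 < -(H.commonFat x.1 y.1 : ℝ)))
  symm := by
    constructor
    rintro x y ⟨hne, h⟩
    refine ⟨hne.symm, ?_⟩
    rw [H.commonFat_comm y.1 x.1]
    rcases h with ⟨ha, hl⟩ | ⟨ha, hl⟩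
    · exact Or.inl ⟨ha.symm, hl⟩
    · exact Or.inr ⟨fun hadj => ha hadj.symm, hl⟩
  loopless := ⟨fun x h => h.1 rfl⟩

/-- The special graph `S(𝔥)`, the union of `S⁻(𝔥)` and `S⁺(𝔥)`. -/
noncomputable def special (H : HoffmanGraph V) : SimpleGraph H.Slim :=
  H.specialMinus ⊔ H.specialPlus

/-- `⟨S⟩_𝔥`: the set `S` together with all fat neighbors of its members. -/
def closureSet (H : HoffmanGraph V) (S : Set V) : Set V :=
  S ∪ {f | H.IsFat f ∧ ∃ x ∈ S, H.graph.Adj x f}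

/-- The Hoffman graph `𝔥^(t)` with one slim vertex (`none`) and `t` fat vertices. -/
def manyFat (t : ℕ) : HoffmanGraph (Option (Fin t)) where
  graph := {
    Adj := fun a b => (a = none ∧ b ≠ none) ∨ (a ≠ none ∧ b = none)
    symm := by
      constructor
      rintro a b (⟨h1, h2⟩ | ⟨h1, h2⟩)
      · exact Or.inr ⟨h2, h1⟩
      · exact Or.inl ⟨h2, h1⟩
    loopless := by
      constructor
      rintro a (⟨h1, h2⟩ | ⟨h1, h2⟩)
      · exact h2 h1
      · exact h1 h2 }
  IsFat := fun a => a ≠ none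
  fat_not_adj := by
    rintro a b ha hb (⟨h1, _⟩ | ⟨_, h1⟩)
    · exact ha h1
    · exact hb h1
  fat_slim_nbr := by
    intro a ha
    refine ⟨none, by simp, Or.inr ⟨ha, rfl⟩⟩

/-- An ordinary (slim) graph regarded as a Hoffman graph. -/
def ofSimple {W : Type*} (G : SimpleGraph W) : HoffmanGraph W where
  graph := G
  IsFat := fun _ => False
  fat_not_adj := by intro x y hx _ _; exact hx
  fat_slim_nbr := by intro x hx; exact hx.elim

end HoffmanGraph
namespace HoffmanGraph

variable {V : Type*}

/-- The Hoffman graph obtained by replacing the fat vertices `f i` by slim cliques of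
sizes `n i`, joining all neighbors of `f i` to all vertices of the `i`-th clique. -/
def blowup {k : ℕ} (H : HoffmanGraph V) (f : Fin k → V) (hf : ∀ i, H.IsFat (f i))
    (n : Fin k → ℕ) :
    HoffmanGraph ({v : V // v ∉ Set.range f} ⊕ (Σ i : Fin k, Fin (n i))) where
  graph := {
    Adj := fun a b =>
      match a, b with
      | .inl u, .inl v => H.graph.Adj u.1 v.1
      | .inl u, .inr x => H.graph.Adj u.1 (f x.1)
      | .inr x, .inl v => H.graph.Adj (f x.1) v.1
      | .inr x, .inr y => x ≠ y ∧ x.1 = y.1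
    symm := by
      constructor
      rintro (u|x) (v|y) h
      · exact h.symm
      · exact h.symm
      · exact h.symm
      · exact ⟨h.1.symm, h.2.symm⟩
    loopless := by
      constructor
      rintro (u|x) h
      · exact H.graph.loopless.irrefl _ h
      · exact h.1 rfl }
  IsFat := fun a => match a with | .inl u => H.IsFat u.1 | .inr _ => False
  fat_not_adj := by
    rintro (u|x) (v|y) hu hv h
    · exact H.fat_not_adj hu hv h
    · exact hv
    · exact hu
    · exact hu
  fat_slim_nbr := by
    rintro (u|x) hu
    · obtain ⟨y, hy, hadj⟩ := H.fat_slim_nbr hu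
      refine ⟨Sum.inl ⟨y, ?_⟩, hy, hadj⟩
      rintro ⟨i, rfl⟩
      exact hy (hf i)
    · exact hu.elim

/-- The slim graph obtained by replacing every fat vertex by a slim `n`-clique,
joining all neighbors of a fat vertex to all vertices of its clique. -/
def blowupAll (H : HoffmanGraph V) (n : ℕ) :
    HoffmanGraph (H.Slim ⊕ ({f : V // H.IsFat f} × Fin n)) where
  graph := {
    Adj := fun a b =>
      match a, b with
      | .inl u, .inl v => H.graph.Adj u.1 v.1
      | .inl u, .inr x => H.graph.Adj u.1 x.1.1
      | .inr x, .inl v => H.graph.Adj x.1.1 v.1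
      | .inr x, .inr y => x ≠ y ∧ x.1 = y.1
    symm := by
      constructor
      rintro (u|x) (v|y) h
      · exact h.symm
      · exact h.symm
      · exact h.symm
      · exact ⟨h.1.symm, h.2.symm⟩
    loopless := by
      constructor
      rintro (u|x) h
      · exact H.graph.loopless.irrefl _ h
      · exact h.1 rfl }
  IsFat := fun _ => False
  fat_not_adj := by intro x y hx _; exact hx.elim
  fat_slim_nbr := by intro x hx; exact hx.elim

/-- The Hoffman graph of Example 4.2: slim vertices `ℤ/4ℤ` (the `inl`'s), fat vertices
`f_j` for `j ∈ ℤ/4ℤ` (the `inr`'s), with edges `{0,2}`, `{1,3}` and `{i, f_j}` for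
`i = j` or `i = j + 1`. -/
def exampleA3tilde : HoffmanGraph (ZMod 4 ⊕ ZMod 4) where
  graph := {
    Adj := fun a b =>
      match a, b with
      | .inl i, .inl j => j = i + 2
      | .inl i, .inr j => i = j ∨ i = j + 1
      | .inr j, .inl i => i = j ∨ i = j + 1
      | .inr _, .inr _ => False
    symm := by
      have h4 : (2 : ZMod 4) + 2 = 0 := by decide
      constructor
      rintro (i|i) (j|j) h
      · have h' : j = i + 2 := h
        subst h'
        show i = i + 2 + 2
        rw [add_assoc, h4, add_zero]
      · exact h
      · exact h
      · exact h.elim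
    loopless := by
      constructor
      rintro (i|i) h
      · exact (by decide : ∀ x : ZMod 4, x ≠ x + 2) i h
      · exact h }
  IsFat := fun a => match a with | .inl _ => False | .inr _ => True
  fat_not_adj := by
    rintro (i|i) (j|j) hx hy h
    · exact hx
    · exact hx
    · exact hy
    · exact h
  fat_slim_nbr := by
    rintro (i|i) hx
    · exact hx.elim
    · exact ⟨Sum.inl i, id, Or.inl rfl⟩

end HoffmanGraph

/-- The extended Dynkin graph `D̃₄`, i.e. the star `K_{1,4}`. -/
def tildeD4Graph : SimpleGraph (Fin 5) := SimpleGraph.fromRel (fun a _ => a = 0)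

/-- The Dynkin graph `A_m`: the path on `m` vertices. -/
def dynkinA (m : ℕ) : SimpleGraph (Fin m) :=
  SimpleGraph.fromRel (fun i j => i.1 + 1 = j.1)

/-- The extended Dynkin graph `Ã_m`: the cycle on `m + 1` vertices. -/
def tildeA (m : ℕ) : SimpleGraph (ZMod (m + 1)) :=
  SimpleGraph.fromRel (fun i j => i + 1 = j)

/-- The Dynkin graph `D_m`: the path `1 - 2 - ⋯ - (m-1)` with the extra vertex `0`
attached to the vertex `2`. -/
def dynkinD (m : ℕ) : SimpleGraph (Fin m) :=
  SimpleGraph.fromRel (fun i j => (1 ≤ i.1 ∧ i.1 + 1 = j.1) ∨ (i.1 = 0 ∧ j.1 = 2))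

/-- The extended Dynkin graph `D̃_m` on `m + 1` vertices: the path `1 - 2 - ⋯ - (m-1)`
with the extra vertex `0` attached to `2` and the extra vertex `m` attached to `m - 2`. -/
def tildeD (m : ℕ) : SimpleGraph (Fin (m + 1)) :=
  SimpleGraph.fromRel (fun i j =>
    (1 ≤ i.1 ∧ i.1 + 1 = j.1 ∧ j.1 ≤ m - 1) ∨ (i.1 = 0 ∧ j.1 = 2) ∨ (i.1 = m ∧ j.1 = m - 2))
namespace HoffmanGraph

open Finset in
lemma neg_three_le_lambdaMin_of_reducedRep {W : Type} [Fintype W] (H : HoffmanGraph W)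
    {n : ℕ} (ψ : W → EuclideanSpace ℝ (Fin n)) (hψ : H.IsReducedRep 3 ψ) :
    (-3 : ℝ) ≤ H.lambdaMin := by
  have key : ∀ x y : H.Slim, H.matrixB x y + (if x = y then (3:ℝ) else 0) = ⟪ψ x.1, ψ y.1⟫ := by
    intro x y
    by_cases hxy : x = y
    · subst hxy
      rw [if_pos rfl, hψ.1 x.1 x.2]
      have hcf : H.commonFat x.1 x.1 = H.fatDeg x.1 := by
        unfold commonFat fatDeg
        congr 1
        ext f
        simp only [Set.mem_setOf_eq]
        tauto
      simp only [matrixB, if_neg (H.graph.loopless.irrefl x.1), hcf]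
      ring
    · have hne : x.1 ≠ y.1 := fun h => hxy (Subtype.ext h)
      rw [if_neg hxy, add_zero]
      by_cases hadj : H.graph.Adj x.1 y.1
      · rw [hψ.2.1 x.1 y.1 x.2 y.2 hadj]
        simp [matrixB, hadj]
      · rw [hψ.2.2 x.1 y.1 x.2 y.2 hne hadj]
        simp [matrixB, hadj]
  unfold lambdaMin
  rcases (spectrum ℝ H.matrixB).eq_empty_or_nonempty with h | h
  · rw [h, Real.sInf_empty]; norm_num
  · refine le_csInf h ?_
    intro μ hμ
    rw [spectrum.mem_iff] at hμ
    have hdet : (algebraMap ℝ (Matrix H.Slim H.Slim ℝ) μ - H.matrixB).det = 0 := by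
      by_contra hd
      exact hμ ((Matrix.isUnit_iff_isUnit_det _).2 (isUnit_iff_ne_zero.2 hd))
    obtain ⟨v, hv0, hv⟩ := (Matrix.exists_mulVec_eq_zero_iff).2 hdet
    have hBv : H.matrixB.mulVec v = μ • v := by
      rw [Matrix.sub_mulVec, Algebra.algebraMap_eq_smul_one, Matrix.smul_mulVec,
        Matrix.one_mulVec, sub_eq_zero] at hv
      exact hv.symm
    have hvv : 0 < ∑ x : H.Slim, v x * v x := by
      obtain ⟨x, hx⟩ := Function.ne_iff.1 hv0
      exact Finset.sum_pos' (fun _ _ => mul_self_nonneg _)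
        ⟨x, Finset.mem_univ x, mul_self_pos.2 hx⟩
    have hgram : (0:ℝ) ≤ ∑ x : H.Slim, ∑ y : H.Slim, v x * v y * ⟪ψ x.1, ψ y.1⟫ := by
      have heq : ∑ x : H.Slim, ∑ y : H.Slim, v x * v y * ⟪ψ x.1, ψ y.1⟫
          = ⟪∑ x : H.Slim, v x • ψ x.1, ∑ y : H.Slim, v y • ψ y.1⟫ := by
        rw [sum_inner]
        refine Finset.sum_congr rfl fun x _ => ?_
        rw [inner_sum]
        refine Finset.sum_congr rfl fun y _ => ?_
        rw [real_inner_smul_left, real_inner_smul_right]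
        ring
      rw [heq]
      exact real_inner_self_nonneg
    have hsum : ∑ x : H.Slim, ∑ y : H.Slim, v x * v y * ⟪ψ x.1, ψ y.1⟫
        = (μ + 3) * ∑ x : H.Slim, v x * v x := by
      have h1 : ∀ x : H.Slim, ∑ y : H.Slim, v x * v y * ⟪ψ x.1, ψ y.1⟫
          = v x * (H.matrixB.mulVec v x) + 3 * (v x * v x) := by
        intro x
        have hterm : ∀ y : H.Slim, v x * v y * ⟪ψ x.1, ψ y.1⟫
            = v x * (H.matrixB x y * v y) + (if x = y then 3 * (v x * v y) else 0) := by
          intro y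
          rw [← key x y]
          split <;> ring
        rw [Finset.sum_congr rfl fun y _ => hterm y, Finset.sum_add_distrib]
        congr 1
        · rw [Matrix.mulVec, dotProduct, Finset.mul_sum]
        · rw [Finset.sum_ite_eq Finset.univ x (fun y => 3 * (v x * v y)),
            if_pos (Finset.mem_univ x)]
      rw [Finset.sum_congr rfl fun x _ => h1 x, Finset.sum_add_distrib, hBv]
      simp only [Pi.smul_apply, smul_eq_mul]
      have h2 : ∑ x : H.Slim, v x * (μ * v x) = μ * ∑ x : H.Slim, v x * v x := by
        rw [Finset.mul_sum]
        exact Finset.sum_congr rfl fun x _ => by ring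
      rw [h2, ← Finset.mul_sum]
      ring
    rw [hsum] at hgram
    nlinarith

lemma attachFat_fatDeg {V : Type} [Fintype V] (H : HoffmanGraph V) (S : Set V)
    (hne : S.Nonempty) (hslim : ∀ v ∈ S, H.IsSlim v) (v : V) :
    (H.attachFat S hne hslim).fatDeg (some v) = H.fatDeg v + (if v ∈ S then 1 else 0) := by
  have hset : {f : Option V | (H.attachFat S hne hslim).IsFat f ∧
        (H.attachFat S hne hslim).graph.Adj (some v) f}
      = (some '' {f | H.IsFat f ∧ H.graph.Adj v f}) ∪ (if v ∈ S then {none} else ∅) := by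
    ext a
    cases a with
    | none => by_cases hv : v ∈ S <;> simp [attachFat, hv]
    | some f => by_cases hv : v ∈ S <;> simp [attachFat, hv]
  unfold fatDeg
  rw [hset]
  by_cases hv : v ∈ S
  · rw [if_pos hv, if_pos hv, Set.union_singleton,
      Set.ncard_insert_of_notMem (by simp) (Set.toFinite _),
      Set.ncard_image_of_injective _ (Option.some_injective V)]
  · rw [if_neg hv, if_neg hv, Set.union_empty,
      Set.ncard_image_of_injective _ (Option.some_injective V), add_zero]

lemma attachFat_commonFat {V : Type} [Fintype V] (H : HoffmanGraph V) (S : Set V)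
    (hne : S.Nonempty) (hslim : ∀ v ∈ S, H.IsSlim v) (u w : V) :
    (H.attachFat S hne hslim).commonFat (some u) (some w)
      = H.commonFat u w + (if u ∈ S ∧ w ∈ S then 1 else 0) := by
  have hset : {f : Option V | (H.attachFat S hne hslim).IsFat f ∧
        (H.attachFat S hne hslim).graph.Adj (some u) f ∧
        (H.attachFat S hne hslim).graph.Adj (some w) f}
      = (some '' {f | H.IsFat f ∧ H.graph.Adj u f ∧ H.graph.Adj w f})
        ∪ (if u ∈ S ∧ w ∈ S then {none} else ∅) := by
    ext a
    cases a with
    | none => by_cases hv : u ∈ S ∧ w ∈ S <;> simp [attachFat, hv]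
    | some f => by_cases hv : u ∈ S ∧ w ∈ S <;> simp [attachFat, hv]
  unfold commonFat
  rw [hset]
  by_cases hv : u ∈ S ∧ w ∈ S
  · rw [if_pos hv, if_pos hv, Set.union_singleton,
      Set.ncard_insert_of_notMem (by simp) (Set.toFinite _),
      Set.ncard_image_of_injective _ (Option.some_injective V)]
  · rw [if_neg hv, if_neg hv, Set.union_empty,
      Set.ncard_image_of_injective _ (Option.some_injective V), add_zero]

lemma no_one_sign {V : Type} [Fintype V] (H : HoffmanGraph V)
    (hsat : H.IsSaturated (-3))
    {n : ℕ} (ψ : V → EuclideanSpace ℝ (Fin n)) (hψ : H.IsReducedRep 3 ψ)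
    (i : Fin n) (c : ℝ) (hc : c * c = 1)
    (hvals : ∀ v, H.IsSlim v → ψ v i = 0 ∨ ψ v i = c)
    (s : V) (hs : H.IsSlim s) (hsne : ψ s i ≠ 0) : False := by
  have hc0 : c ≠ 0 := fun h => by rw [h, mul_zero] at hc; norm_num at hc
  have hne' : ({v | H.IsSlim v ∧ ψ v i = c} : Set V).Nonempty :=
    ⟨s, hs, (hvals s hs).resolve_left hsne⟩
  set S : Set V := {v | H.IsSlim v ∧ ψ v i = c} with hSdef
  have hslimS : ∀ v ∈ S, H.IsSlim v := fun v hv => hv.1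
  have hprod : ∀ u w, H.IsSlim u → H.IsSlim w →
      ψ u i * ψ w i = (if u ∈ S ∧ w ∈ S then 1 else 0) := by
    intro u w hu hw
    rcases hvals u hu with h1 | h1
    · rw [if_neg (fun h => hc0 (h.1.2.symm.trans h1))]
      rw [h1, zero_mul]
    · rcases hvals w hw with h2 | h2
      · rw [if_neg (fun h => hc0 (h.2.2.symm.trans h2))]
        rw [h2, mul_zero]
      · rw [if_pos ⟨⟨hu, h1⟩, ⟨hw, h2⟩⟩]
        rw [h1, h2, hc]
  set ψ' : Option V → EuclideanSpace ℝ (Fin n) :=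
    fun a => a.elim 0 (fun v => WithLp.toLp 2 (fun j => if j = i then 0 else ψ v j)) with hψ'def
  have hinner : ∀ u w : V, ⟪ψ' (some u), ψ' (some w)⟫ = ⟪ψ u, ψ w⟫ - ψ u i * ψ w i := by
    intro u w
    simp only [PiLp.inner_apply, RCLike.inner_apply, conj_trivial]
    have hterm : ∀ j : Fin n, ψ' (some u) j * ψ' (some w) j
        = ψ u j * ψ w j - (if j = i then ψ u i * ψ w i else 0) := by
      intro j
      show (if j = i then (0:ℝ) else ψ u j) * (if j = i then 0 else ψ w j) = _
      by_cases h : j = i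
      · subst h; simp
      · simp [h]
    simp only [mul_comm ((ψ' (some w)).ofLp _), mul_comm ((ψ w).ofLp _)]
    rw [Finset.sum_congr rfl fun j _ => hterm j, Finset.sum_sub_distrib,
      Finset.sum_ite_eq' Finset.univ i (fun _ => ψ u i * ψ w i), if_pos (Finset.mem_univ i)]
  have hrep : (H.attachFat S hne' hslimS).IsReducedRep 3 ψ' := by
    refine ⟨?_, ?_, ?_⟩
    · rintro (_|v) hx
      · exact absurd trivial hx
      · have hv : H.IsSlim v := hx
        rw [hinner v v, hψ.1 v hv, hprod v v hv hv, attachFat_fatDeg]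
        by_cases hvS : v ∈ S
        · rw [if_pos ⟨hvS, hvS⟩, if_pos hvS]
          push_cast
          ring
        · rw [if_neg (fun h => hvS h.1), if_neg hvS]
          push_cast
          ring
    · rintro (_|u) (_|w) hx hy hadj
      · exact absurd trivial hx
      · exact absurd trivial hx
      · exact absurd trivial hy
      · have hu : H.IsSlim u := hx
        have hw : H.IsSlim w := hy
        have hadj' : H.graph.Adj u w := hadj
        rw [hinner u w, hψ.2.1 u w hu hw hadj', hprod u w hu hw, attachFat_commonFat]
        by_cases h : u ∈ S ∧ w ∈ S
        · rw [if_pos h, if_pos h]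
          push_cast
          ring
        · rw [if_neg h, if_neg h]
          push_cast
          ring
    · rintro (_|u) (_|w) hx hy hne hadj
      · exact absurd trivial hx
      · exact absurd trivial hx
      · exact absurd trivial hy
      · have hu : H.IsSlim u := hx
        have hw : H.IsSlim w := hy
        have hne'' : u ≠ w := fun h => hne (by rw [h])
        have hadj' : ¬ H.graph.Adj u w := hadj
        rw [hinner u w, hψ.2.2 u w hu hw hne'' hadj', hprod u w hu hw, attachFat_commonFat]
        by_cases h : u ∈ S ∧ w ∈ S
        · rw [if_pos h, if_pos h]
          push_cast
          ring
        · rw [if_neg h, if_neg h]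
          push_cast
          ring
  exact hsat.2 S hne' hslimS (neg_three_le_lambdaMin_of_reducedRep _ ψ' hrep)

end HoffmanGraph

/-- Lemma 4.3: if `𝔥` is a fat indecomposable `(-3)`-saturated Hoffman graph with an
integral reduced representation `ψ` of norm `3` and `ψ(s)ᵢ ≠ 0` for some slim `s`, then
there are slim vertices `s₁, s₂` with `ψ(s₁)ᵢ = 1` and `ψ(s₂)ᵢ = -1`. -/
theorem exists_slim_with_plus_minus_one_coordinate {V : Type} [Fintype V]
    (H : HoffmanGraph V) (hfat : H.IsFatGraph) (hind : H.Indecomposable)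
    (hsat : H.IsSaturated (-3))
    (n : ℕ) (ψ : V → EuclideanSpace ℝ (Fin n)) (hψ : H.IsReducedRep 3 ψ)
    (hint : ∀ v, H.IsSlim v → ∀ i, ∃ k : ℤ, ψ v i = (k : ℝ))
    (i : Fin n) (s : V) (hs : H.IsSlim s) (hsne : ψ s i ≠ 0) :
    ∃ s₁ s₂ : V, H.IsSlim s₁ ∧ H.IsSlim s₂ ∧ ψ s₁ i = 1 ∧ ψ s₂ i = -1 := by
  have hrange : ∀ v, H.IsSlim v → ψ v i = 0 ∨ ψ v i = 1 ∨ ψ v i = -1 := by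
    intro v hv
    obtain ⟨k, hk⟩ := hint v hv i
    have h1 : (1:ℕ) ≤ H.fatDeg v := by
      obtain ⟨f, hf, hadj⟩ := hfat v hv
      exact (Set.ncard_pos (Set.toFinite _)).2 ⟨f, hf, hadj⟩
    have hsum : ∑ j : Fin n, ψ v j * ψ v j = 3 - (H.fatDeg v : ℝ) := by
      have h := hψ.1 v hv
      simpa only [PiLp.inner_apply, RCLike.inner_apply, conj_trivial] using h
    have hterm : ψ v i * ψ v i ≤ ∑ j : Fin n, ψ v j * ψ v j :=
      Finset.single_le_sum (fun j _ => mul_self_nonneg (ψ v j)) (Finset.mem_univ i)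
    have hfd1 : (1:ℝ) ≤ (H.fatDeg v : ℝ) := by exact_mod_cast h1
    have hle : ψ v i * ψ v i ≤ 2 := by
      rw [hsum] at hterm
      linarith
    rw [hk] at hle
    have hk2 : k * k ≤ 2 := by exact Int.cast_le.mp (by push_cast; linarith : ((k * k : ℤ) : ℝ) ≤ ((2 : ℤ) : ℝ))
    have hk3 : k = 0 ∨ k = 1 ∨ k = -1 := by
      have hA : -1 ≤ k := by nlinarith
      have hB : k ≤ 1 := by nlinarith
      omega
    rcases hk3 with h | h | h
    · left; rw [hk, h]; norm_num
    · right; left; rw [hk, h]; norm_num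
    · right; right; rw [hk, h]; norm_num
  have hplus : ∃ t, H.IsSlim t ∧ ψ t i = 1 := by
    by_contra hcon
    push_neg at hcon
    have hvals : ∀ v, H.IsSlim v → ψ v i = 0 ∨ ψ v i = -1 := by
      intro v hv
      rcases hrange v hv with h | h | h
      · exact Or.inl h
      · exact absurd h (hcon v hv)
      · exact Or.inr h
    exact H.no_one_sign hsat ψ hψ i (-1) (by norm_num) hvals s hs hsne
  have hminus : ∃ t, H.IsSlim t ∧ ψ t i = -1 := by
    by_contra hcon
    push_neg at hcon
    have hvals : ∀ v, H.IsSlim v → ψ v i = 0 ∨ ψ v i = 1 := by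
      intro v hv
      rcases hrange v hv with h | h | h
      · exact Or.inl h
      · exact Or.inr h
      · exact absurd h (hcon v hv)
    exact H.no_one_sign hsat ψ hψ i 1 (by norm_num) hvals s hs hsne
  obtain ⟨s₁, hs₁, h1⟩ := hplus
  obtain ⟨s₂, hs₂, h2⟩ := hminus
  exact ⟨s₁, s₂, hs₁, hs₂, h1, h2⟩
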